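/- Any subgroup of S_n of order exactly (n-1)! that does not act transitively on {0,...,n-1} is the stabilizer of a point, i.e., equals the set of permutations fixing some i ∈ {0,...,n-1}. -/

import Mathlib

open MulAction Equiv

lemma arith3 {n k : ℕ} (h2 : 2 ≤ k) (hk : k ≤ n - 2)
    (hle : (n - 1).factorial ≤ k.factorial * (n - k).factorial) : False := by
  have hn : k + 2 ≤ n := by omega
  have hid : (n-1).choose (k-1) * (k-1).factorial * (n-k).factorial = (n-1).factorial := by
    have := Nat.choose_mul_factorial_mul_factorial (show k-1 ≤ n-1 by omega)
    have h : n - 1 - (k - 1) = n - k := by omega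
    rw [h] at this; exact this
  have hkf : k.factorial = k * (k-1).factorial := by
    obtain ⟨m, rfl⟩ : ∃ m, k = m + 1 := ⟨k-1, by omega⟩
    simp [Nat.factorial_succ]
  have hupper : (n-1).choose (k-1) ≤ k := by
    have hpos : 0 < (k-1).factorial * (n-k).factorial :=
      Nat.mul_pos (Nat.factorial_pos _) (Nat.factorial_pos _)
    have : (n-1).choose (k-1) * ((k-1).factorial * (n-k).factorial)
        ≤ k * ((k-1).factorial * (n-k).factorial) := by
      calc (n-1).choose (k-1) * ((k-1).factorial * (n-k).factorial)
          = (n-1).factorial := by rw [← hid]; ring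
        _ ≤ k.factorial * (n-k).factorial := hle
        _ = k * ((k-1).factorial * (n-k).factorial) := by rw [hkf]; ring
    exact Nat.le_of_mul_le_mul_right this hpos
  have hlower : k + 1 ≤ (n-1).choose (k-1) := by
    have h1 : (k+1).choose (k-1) ≤ (n-1).choose (k-1) :=
      Nat.choose_mono _ (by omega)
    have h2' : (k+1).choose (k-1) = (k+1).choose 2 := by
      have he : k - 1 = (k+1) - 2 := by omega
      rw [he, Nat.choose_symm (by omega)]
    have h3 : (k+1).choose 2 = (k+1) * k / 2 := by
      rw [Nat.choose_two_right]; simp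
    have h4 : k + 1 ≤ (k+1) * k / 2 := by
      rw [Nat.le_div_iff_mul_le (by norm_num)]
      nlinarith
    omega
  omega


lemma stab_card {n : ℕ} (hn : 1 ≤ n) (p : Fin n) :
    Nat.card (MulAction.stabilizer (Equiv.Perm (Fin n)) p) = (n-1).factorial := by
  classical
  have horb : MulAction.orbit (Equiv.Perm (Fin n)) p = Set.univ := by
    ext b; simp only [Set.mem_univ, iff_true]
    exact ⟨Equiv.swap b p, Equiv.swap_apply_right b p⟩
  haveI : Fintype ↥(MulAction.orbit (Equiv.Perm (Fin n)) p) := Fintype.ofFinite _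
  have key := MulAction.card_orbit_mul_card_stabilizer_eq_card_group (Equiv.Perm (Fin n)) p
  have hco : Fintype.card ↥(MulAction.orbit (Equiv.Perm (Fin n)) p) = n := by
    have := Fintype.card_congr ((Equiv.setCongr horb).trans (Equiv.Set.univ (Fin n)))
    simpa using this
  rw [hco, Fintype.card_perm, Fintype.card_fin] at key
  rw [Nat.card_eq_fintype_card]
  have hfac : n.factorial = n * (n-1).factorial := by
    obtain ⟨m, rfl⟩ : ∃ m, n = m + 1 := ⟨n-1, by omega⟩
    simp [Nat.factorial_succ]
  rw [hfac] at key
  exact Nat.eq_of_mul_eq_mul_left (by omega) key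

/-- Any subgroup of `S_n` of order exactly `(n-1)!` that does not act transitively on
`{0,…,n-1}` is the stabilizer of a point. -/
theorem stmt3 (n : ℕ) (H : Subgroup (Equiv.Perm (Fin n)))
    (hcard : Nat.card H = (n - 1).factorial)
    (hnt : ¬ ∀ i j : Fin n, ∃ t ∈ H, t i = j) :
    ∃ i : Fin n, ∀ g : Equiv.Perm (Fin n), g ∈ H ↔ g i = i := by
  classical
  push_neg at hnt
  obtain ⟨i, j, hij⟩ := hnt
  have hn : 1 ≤ n := i.pos
  set O : Set (Fin n) := MulAction.orbit H i with hOdef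
  -- membership criterion
  have hmem : ∀ x : Fin n, x ∈ O ↔ ∃ h : Equiv.Perm (Fin n), h ∈ H ∧ h i = x := by
    intro x
    constructor
    · rintro ⟨h, rfl⟩
      exact ⟨h, h.2, rfl⟩
    · rintro ⟨h, hh, rfl⟩
      exact ⟨⟨h, hh⟩, rfl⟩
  have hiO : i ∈ O := MulAction.mem_orbit_self i
  have hjO : j ∉ O := by
    rw [hmem]; rintro ⟨h, hh, hhi⟩; exact hij h hh hhi
  -- invariance
  have hfwd : ∀ g : Equiv.Perm (Fin n), g ∈ H → ∀ x ∈ O, g x ∈ O := by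
    intro g hg x hx
    rw [hmem] at hx ⊢
    obtain ⟨h, hh, rfl⟩ := hx
    exact ⟨g * h, mul_mem hg hh, rfl⟩
  have hinv : ∀ g : Equiv.Perm (Fin n), g ∈ H → ∀ x, x ∈ O ↔ g x ∈ O := by
    intro g hg x
    refine ⟨hfwd g hg x, fun hx => ?_⟩
    have := hfwd g⁻¹ (inv_mem hg) (g x) hx
    simpa using this
  haveI : Fintype ↥O := Fintype.ofFinite _
  haveI : Fintype ↥(Oᶜ) := Fintype.ofFinite _
  set k := Fintype.card ↥O with hk
  have hk1 : 1 ≤ k := Fintype.card_pos_iff.mpr ⟨⟨i, hiO⟩⟩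
  have hklt : k < n := by
    have h := Fintype.card_lt_of_injective_of_notMem
      (Subtype.val : ↥O → Fin n) Subtype.val_injective (b := j) (by simpa using hjO)
    simpa only [Fintype.card_fin] using h
  have hcompl : Fintype.card ↥(Oᶜ) = n - k := by
    rw [Fintype.card_compl_set]
    simp [hk]
  have hle : (n-1).factorial ≤ k.factorial * (n-k).factorial := by
    have hinj : Function.Injective (fun h : H =>
        (((h : Equiv.Perm (Fin n)).subtypePerm (fun x => (hinv h h.2 x).symm) : Equiv.Perm ↥O),
         ((h : Equiv.Perm (Fin n)).subtypePerm
            (fun x => (not_iff_not.mpr (hinv h h.2 x)).symm) : Equiv.Perm ↥(Oᶜ)))) := by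
      intro a b hab
      rw [Prod.ext_iff] at hab
      obtain ⟨h1, h2⟩ := hab
      apply Subtype.ext
      apply Equiv.ext
      intro x
      by_cases hx : x ∈ O
      · have := Equiv.ext_iff.mp h1 ⟨x, hx⟩
        simpa [Equiv.Perm.subtypePerm_apply, Subtype.ext_iff] using this
      · have := Equiv.ext_iff.mp h2 ⟨x, hx⟩
        simpa [Equiv.Perm.subtypePerm_apply, Subtype.ext_iff] using this
    have hc := Nat.card_le_card_of_injective _ hinj
    rw [hcard, Nat.card_prod, Nat.card_eq_fintype_card (α := Equiv.Perm ↥O),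
      Nat.card_eq_fintype_card (α := Equiv.Perm ↥(Oᶜ)),
      Fintype.card_perm, Fintype.card_perm, hcompl] at hc
    exact hc
  have hcase : k = 1 ∨ k = n - 1 := by
    by_contra hc
    push_neg at hc
    exact arith3 (by omega) (by omega) hle
  obtain ⟨p, hp⟩ : ∃ p : Fin n, ∀ g ∈ H, g p = p := by
    rcases hcase with h1 | h1
    · refine ⟨i, fun g hg => ?_⟩
      have hsub := (Fintype.card_le_one_iff (α := ↥O)).mp (by omega)
      have := hsub ⟨g i, hfwd g hg i hiO⟩ ⟨i, hiO⟩
      exact Subtype.ext_iff.mp this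
    · have hc1 : Fintype.card ↥(Oᶜ) = 1 := by omega
      obtain ⟨⟨p, hpO⟩⟩ := Fintype.card_pos_iff.mp (by omega : 0 < Fintype.card ↥(Oᶜ))
      refine ⟨p, fun g hg => ?_⟩
      have hgp : g p ∈ Oᶜ := fun hmem' => hpO ((hinv g hg p).mpr hmem')
      have := (Fintype.card_le_one_iff (α := ↥(Oᶜ))).mp (by omega) ⟨g p, hgp⟩ ⟨p, hpO⟩
      exact Subtype.ext_iff.mp this
  have hsub : H ≤ MulAction.stabilizer (Equiv.Perm (Fin n)) p := fun g hg => hp g hg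
  have heq : H = MulAction.stabilizer (Equiv.Perm (Fin n)) p :=
    Subgroup.eq_of_le_of_card_ge hsub (by rw [stab_card hn p, hcard])
  refine ⟨p, fun g => ?_⟩
  rw [heq]
  exact Iff.rfl
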